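/- Under the iterative construction of the sequences (k_i) and (b_i), assume in addition k_{i+1} < 2·k_i for all i ≥ 2. Then the following two conditions are equivalent: (a) Σ_{j=1}^{i} μ(k_j)/k_j = (1 + b_i(k_i))/k_i for all i ≥ 2; (e) Σ_{j=1}^{i} μ(k_j)·⌊k_i/k_j⌋ = 1 for all i ≥ 1. -/

import Mathlib

/-- Assuming `k_{i+1} < 2 k_i` for `i ≥ 2`: equivalence of conditions (a) and (e). -/
theorem stmt_16 (k : ℕ → ℕ) (b : ℕ → ℝ → ℝ)
    (hk1 : k 1 = 1) (hk2 : k 2 = 2)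
    (hb2 : ∀ x : ℝ, b 2 x
      = Int.fract (x / (k 1 : ℝ)) - ((k 2 : ℝ) / (k 1 : ℝ)) * Int.fract (x / (k 2 : ℝ)))
    (hmono : ∀ i : ℕ, 2 ≤ i → k i < k (i + 1))
    (hne : ∀ i : ℕ, 2 ≤ i → b i ((k (i + 1) : ℝ)) ≠ b i ((k i : ℝ)))
    (hleast : ∀ i : ℕ, 2 ≤ i → ∀ m : ℕ, k i < m → m < k (i + 1) → b i (m : ℝ) = b i ((k i : ℝ)))
    (hbrec : ∀ i : ℕ, 2 ≤ i → ∀ x : ℝ, b (i + 1) x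
      = b i x + (1 + b i ((k i : ℝ)))
          * (Int.fract (x / (k i : ℝ))
            - ((k (i + 1) : ℝ) / (k i : ℝ)) * Int.fract (x / (k (i + 1) : ℝ))))
    (hgrow : ∀ i : ℕ, 2 ≤ i → k (i + 1) < 2 * k i) :
    (∀ i : ℕ, 2 ≤ i →
        ∑ j ∈ Finset.Icc 1 i, (ArithmeticFunction.moebius (k j) : ℝ) / (k j : ℝ)
          = (1 + b i ((k i : ℝ))) / (k i : ℝ))
      ↔ (∀ i : ℕ, 1 ≤ i →
        ∑ j ∈ Finset.Icc 1 i, ArithmeticFunction.moebius (k j) * ((k i / k j : ℕ) : ℤ) = 1) := by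
  classical
  -- positivity of k
  have hpos : ∀ j : ℕ, 1 ≤ j → 0 < k j := by
    intro j hj
    induction j with
    | zero => omega
    | succ n ih =>
      rcases Nat.lt_or_ge n 2 with h | h
      · interval_cases n <;> simp [hk1, hk2]
      · exact lt_trans (ih (by omega)) (hmono n h)
  -- sum splitting helper
  have hsplit : ∀ (n : ℕ) (f : ℕ → ℝ), 1 ≤ n + 1 →
      (∑ j ∈ Finset.Icc 1 (n+1), f j) = (∑ j ∈ Finset.Icc 1 n, f j) + f (n+1) := by
    intro n f _
    rw [← Finset.insert_Icc_right_eq_Icc_add_one (by omega), Finset.sum_insert (by simp)]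
    ring
  have hsplitZ : ∀ (n : ℕ) (f : ℕ → ℤ),
      (∑ j ∈ Finset.Icc 1 (n+1), f j) = (∑ j ∈ Finset.Icc 1 n, f j) + f (n+1) := by
    intro n f
    rw [← Finset.insert_Icc_right_eq_Icc_add_one (by omega), Finset.sum_insert (by simp)]
    ring
  -- fractional part of a nat quotient
  have hfr : ∀ a c : ℕ, 0 < c →
      Int.fract ((a:ℝ)/(c:ℝ)) = (a:ℝ)/(c:ℝ) - ((a / c : ℕ) : ℝ) := by
    intro a c hc
    have h0 : (0:ℝ) ≤ (a:ℝ)/(c:ℝ) := by positivity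
    rw [Int.fract, ← Int.natCast_floor_eq_floor h0, Nat.floor_div_eq_div]
    norm_cast
  have hfr1 : ∀ c : ℕ, 0 < c → Int.fract ((c:ℝ)/(c:ℝ)) = 0 := by
    intro c hc
    have : (c:ℝ) ≠ 0 := Nat.cast_ne_zero.mpr hc.ne'
    rw [div_self this, Int.fract_one]
  -- representation lemma for b (i+1)
  have rep : ∀ i : ℕ, 1 ≤ i →
      (∀ j, 2 ≤ j → j ≤ i →
        (k j : ℝ) * (∑ m ∈ Finset.Icc 1 j, (ArithmeticFunction.moebius (k m) : ℝ) / (k m : ℝ))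
          = 1 + b j ((k j : ℝ))) →
      ∀ x : ℝ, b (i+1) x
        = (∑ j ∈ Finset.Icc 1 i, (ArithmeticFunction.moebius (k j) : ℝ) * Int.fract (x / (k j : ℝ)))
          - (k (i+1) : ℝ)
            * (∑ j ∈ Finset.Icc 1 i, (ArithmeticFunction.moebius (k j) : ℝ) / (k j : ℝ))
            * Int.fract (x / (k (i+1) : ℝ)) := by
    intro i hi
    induction i, hi using Nat.le_induction with
    | base =>
      intro _ x
      rw [hb2 x]
      simp [hk1, hk2, ArithmeticFunction.moebius_apply_one]
    | succ n hn ih =>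
      intro hPa x
      have hk1pos : (0:ℝ) < (k (n+1) : ℝ) := by exact_mod_cast hpos (n+1) (by omega)
      have hk1ne : (k (n+1) : ℝ) ≠ 0 := hk1pos.ne'
      have hbn := hPa (n+1) (by omega) (le_refl _)
      have hrec := hbrec (n+1) (by omega) x
      have ihx := ih (fun j h1 h2 => hPa j h1 (by omega)) x
      rw [← hbn, ihx] at hrec
      rw [hrec, hsplit n (fun j => (ArithmeticFunction.moebius (k j) : ℝ)
            * Int.fract (x / (k j : ℝ))) (by omega),
        hsplit n (fun j => (ArithmeticFunction.moebius (k j) : ℝ) / (k j : ℝ)) (by omega)]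
      field_simp
      ring
  -- the key identity relating defects of (a) and (e)
  have key : ∀ i : ℕ, 1 ≤ i →
      (∀ j, 2 ≤ j → j ≤ i →
        (k j : ℝ) * (∑ m ∈ Finset.Icc 1 j, (ArithmeticFunction.moebius (k m) : ℝ) / (k m : ℝ))
          = 1 + b j ((k j : ℝ))) →
      (k (i+1) : ℝ)
          * (∑ j ∈ Finset.Icc 1 (i+1), (ArithmeticFunction.moebius (k j) : ℝ) / (k j : ℝ))
        - (1 + b (i+1) ((k (i+1) : ℝ)))
      = ((∑ j ∈ Finset.Icc 1 (i+1),
            ArithmeticFunction.moebius (k j) * ((k (i+1) / k j : ℕ) : ℤ) : ℤ) : ℝ) - 1 := by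
    intro i hi hPa
    have hkpos : 0 < k (i+1) := hpos (i+1) (by omega)
    have hkne : (k (i+1) : ℝ) ≠ 0 := Nat.cast_ne_zero.mpr hkpos.ne'
    have hrep := rep i hi hPa ((k (i+1) : ℝ))
    rw [hfr1 _ hkpos, mul_zero, sub_zero] at hrep
    have hsum : (∑ j ∈ Finset.Icc 1 i,
          (ArithmeticFunction.moebius (k j) : ℝ) * Int.fract ((k (i+1) : ℝ)/(k j : ℝ)))
        = (k (i+1) : ℝ)
            * (∑ j ∈ Finset.Icc 1 i, (ArithmeticFunction.moebius (k j) : ℝ) / (k j : ℝ))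
          - ((∑ j ∈ Finset.Icc 1 i,
              ArithmeticFunction.moebius (k j) * ((k (i+1) / k j : ℕ) : ℤ) : ℤ) : ℝ) := by
      rw [Finset.mul_sum, Int.cast_sum, ← Finset.sum_sub_distrib]
      apply Finset.sum_congr rfl
      intro j hj
      have hkj : 0 < k j := hpos j (Finset.mem_Icc.mp hj).1
      have hkjne : (k j : ℝ) ≠ 0 := Nat.cast_ne_zero.mpr hkj.ne'
      rw [hfr _ _ hkj, Int.cast_mul, Int.cast_natCast]
      field_simp
    rw [hsum] at hrep
    rw [hsplit i (fun j => (ArithmeticFunction.moebius (k j) : ℝ) / (k j : ℝ)) (by omega),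
      hsplitZ i (fun j => ArithmeticFunction.moebius (k j) * ((k (i+1) / k j : ℕ) : ℤ)),
      Nat.div_self hkpos]
    push_cast
    rw [hrep]
    push_cast
    field_simp
    ring
  constructor
  · -- (a) → (e)
    intro ha i hi
    rcases Nat.lt_or_ge i 2 with h2 | h2
    · interval_cases i
      simp [hk1, ArithmeticFunction.moebius_apply_one]
    · obtain ⟨n, rfl⟩ : ∃ n, i = n + 1 := ⟨i - 1, by omega⟩
      have hPa : ∀ j, 2 ≤ j → j ≤ n →
          (k j : ℝ) * (∑ m ∈ Finset.Icc 1 j, (ArithmeticFunction.moebius (k m) : ℝ) / (k m : ℝ))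
            = 1 + b j ((k j : ℝ)) := by
        intro j hj _
        have hkne : (k j : ℝ) ≠ 0 := Nat.cast_ne_zero.mpr (hpos j (by omega)).ne'
        have := ha j hj
        rw [this]
        field_simp
      have hkey := key n (by omega) hPa
      have hkne : (k (n+1) : ℝ) ≠ 0 := Nat.cast_ne_zero.mpr (hpos (n+1) (by omega)).ne'
      have han := ha (n+1) (by omega)
      rw [han] at hkey
      rw [mul_div_cancel₀ _ hkne, sub_self] at hkey
      have : ((∑ j ∈ Finset.Icc 1 (n+1),
          ArithmeticFunction.moebius (k j) * ((k (n+1) / k j : ℕ) : ℤ) : ℤ) : ℝ) = 1 := by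
        linarith
      exact_mod_cast this
  · -- (e) → (a)
    intro he
    have key2 : ∀ i : ℕ, 2 ≤ i →
        (k i : ℝ) * (∑ m ∈ Finset.Icc 1 i, (ArithmeticFunction.moebius (k m) : ℝ) / (k m : ℝ))
          = 1 + b i ((k i : ℝ)) := by
      intro i
      induction i using Nat.strong_induction_on with
      | _ i IH =>
        intro hi
        obtain ⟨n, rfl⟩ : ∃ n, i = n + 1 := ⟨i - 1, by omega⟩
        have hkey := key n (by omega) (fun j hj1 hj2 => IH j (by omega) hj1)
        rw [he (n+1) (by omega)] at hkey
        norm_num at hkey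
        linarith
    intro i hi
    have hkne : (k i : ℝ) ≠ 0 := Nat.cast_ne_zero.mpr (hpos i (by omega)).ne'
    rw [eq_div_iff hkne]
    linear_combination key2 i hi
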